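/- arXiv:1911.12493 — 3 statements merged into one kernel-verified Lean document; each statement's English description precedes it below -/
import Mathlib

section
/- Let R be a commutative ring, let e ∈ R be nilpotent, and let x, a, b ∈ R. Suppose that for every n ≥ 0 one has x^n = x^n·a + e·x^{n+1} - x^n·b, with the case n = 0 reading 1 = a + e·x - b. Then 1 = Σ_{i≥0} e^i x^i (a - b), where the sum is finite since e is nilpotent. -/
/-- Lemma 4.2 (algebraic content): breaking apart unity. -/
theorem stmt_1 (R : Type*) [CommRing R] (e x a b : R) (N : ℕ) (hN : e ^ N = 0)
    (h : ∀ n : ℕ, x ^ n = x ^ n * a + e * x ^ (n + 1) - x ^ n * b) :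
    1 = ∑ i ∈ Finset.range N, e ^ i * x ^ i * (a - b) := by
  have key : ∀ i, e ^ i * x ^ i * (a - b) = (e * x) ^ i - (e * x) ^ (i + 1) := by
    intro i
    have := congrArg (fun t => e ^ i * t) (h i)
    simp only [mul_pow, pow_succ] at *
    ring_nf at this ⊢
    linear_combination -this
  calc (1 : R) = (e * x) ^ 0 - (e * x) ^ N := by simp [mul_pow, hN]
    _ = ∑ i ∈ Finset.range N, ((e * x) ^ i - (e * x) ^ (i + 1)) := (Finset.sum_range_sub' (fun i => (e * x) ^ i) N).symm
    _ = ∑ i ∈ Finset.range N, e ^ i * x ^ i * (a - b) := by simp [key]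
end

section
/- Let R be a commutative ring, let r ≤ n+1, and let M = (M_{l,j}) with 0 ≤ l ≤ r-1, 0 ≤ j ≤ n be elements of R such that M_{l, r-1-l} is a unit for each l and M_{l,j} is nilpotent whenever j ≠ r-1-l. Then the rows of M are R-linearly independent: if x₀,…,x_{r-1} ∈ R satisfy Σ_l x_l M_{l,j} = 0 for all j, then x_l = 0 for all l. -/
/-- Rows of a matrix with units on the antidiagonal positions and nilpotent entries
elsewhere are linearly independent. -/
theorem stmt_13 (R : Type*) [CommRing R] (r n : ℕ) (hrn : r ≤ n + 1)
    (M : ℕ → ℕ → R)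
    (hunit : ∀ l < r, IsUnit (M l (r - 1 - l)))
    (hnil : ∀ l < r, ∀ j ≤ n, j ≠ r - 1 - l → IsNilpotent (M l j))
    (x : ℕ → R) (hx : ∀ j ≤ n, ∑ l ∈ Finset.range r, x l * M l j = 0) :
    ∀ l < r, x l = 0 := by
  classical
  set A : Matrix (Fin r) (Fin r) R := Matrix.of fun i j => M i (r - 1 - (j : ℕ)) with hA
  have hdiag : ∀ i : Fin r, IsUnit (A i i) := fun i => hunit i i.2
  have hoff : ∀ i j : Fin r, i ≠ j → IsNilpotent (A i j) := by
    intro i j hij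
    have hi2 := i.2; have hj2 := j.2
    have hne : (i : ℕ) ≠ (j : ℕ) := fun h => hij (Fin.val_injective h)
    exact hnil i i.2 (r - 1 - (j : ℕ)) (by omega) (by omega)
  have hdet : IsUnit A.det := by
    rw [Matrix.det_apply,
      ← Finset.add_sum_erase _ _ (Finset.mem_univ (1 : Equiv.Perm (Fin r)))]
    refine IsNilpotent.isUnit_add_left_of_commute ?_ ?_ (Commute.all _ _)
    · apply isNilpotent_sum
      intro σ hσ
      have hσ1 : σ ≠ 1 := (Finset.mem_erase.mp hσ).1
      obtain ⟨i, hi⟩ : ∃ i, σ i ≠ i := by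
        by_contra h; push_neg at h; exact hσ1 (Equiv.ext h)
      have hp : IsNilpotent (∏ j, A (σ j) j) := by
        rw [← Finset.mul_prod_erase _ _ (Finset.mem_univ i)]
        exact (Commute.all _ _).isNilpotent_mul_right (hoff (σ i) i hi)
      obtain ⟨k, hk⟩ := hp
      exact ⟨k, by rw [smul_pow, hk, smul_zero]⟩
    · simpa using Finset.prod_induction (s := Finset.univ) (fun i => A ((1 : Equiv.Perm (Fin r)) i) i)
        IsUnit (fun _ _ => IsUnit.mul) isUnit_one (fun i _ => hdiag i)
  -- the row vector
  set v : Fin r → R := fun i => x i with hv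
  have hvA : Matrix.vecMul v A = 0 := by
    funext j
    have := hx (r - 1 - (j : ℕ)) (by have := j.2; omega)
    simpa [Matrix.vecMul, dotProduct, A,
      Finset.sum_range fun l => x l * M l (r - 1 - (j : ℕ))] using this
  have key : A.det • v = 0 := by
    have : Matrix.vecMul (Matrix.vecMul v A) (Matrix.adjugate A) = 0 := by
      rw [hvA, Matrix.zero_vecMul]
    rw [Matrix.vecMul_vecMul, Matrix.mul_adjugate] at this
    funext j
    have hj := congrFun this j
    simpa [Matrix.vecMul, dotProduct, Matrix.one_apply, mul_comm,
      Finset.mul_sum] using hj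
  intro l hl
  have := congrFun key ⟨l, hl⟩
  have h0 : A.det * x l = 0 := this
  obtain ⟨u, hu⟩ := hdet
  calc x l = (u⁻¹ : Rˣ) * (A.det * x l) := by rw [← hu]; simp [← mul_assoc]
    _ = 0 := by rw [h0, mul_zero]
end

section
/- Let R be a commutative ring, let N ⊆ R be its nilradical, and let u ∈ R and f = a₀ + a₁ t + ⋯ + a_{r-1} t^{r-1} ∈ R[t] with a₁ a unit and a_i ∈ N for all i ≠ 1. Then in any R-algebra S, the elements 1, f(s), f(s)², …, f(s)^{r-1} generate the same R-submodule as 1, s, s², …, s^{r-1} whenever 1, s, …, s^{r-1} is a basis of a free R-submodule of S and s^r lies in the span of 1, s, …, s^{r-1} with coefficients in R. In particular, 1, f(s), …, f(s)^{r-1} is again an R-basis of that submodule. -/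
theorem aux_isUnit_of_quot {R : Type*} [CommRing R] (x : R)
    (h : IsUnit (Ideal.Quotient.mk (nilradical R) x)) : IsUnit x := by
  obtain ⟨u, hu⟩ := h
  obtain ⟨y, hy⟩ := Ideal.Quotient.mk_surjective ((u⁻¹ : (R ⧸ nilradical R)ˣ) : R ⧸ nilradical R)
  have hmem : x * y - 1 ∈ nilradical R := by
    rw [← Ideal.Quotient.eq_zero_iff_mem, map_sub, map_mul, ← hu, hy, map_one, Units.mul_inv,
      sub_self]
  have hn : IsNilpotent (x * y - 1) := hmem
  have hxy : IsUnit (x * y) := by simpa using hn.isUnit_add_one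
  exact isUnit_of_mul_isUnit_left hxy

/-- Twisting a basis 1, s, …, s^{r-1} by a polynomial f with unit linear
coefficient and nilpotent other coefficients yields again a basis of the same
submodule. -/
theorem stmt_18 (R S : Type*) [CommRing R] [CommRing S] [Algebra R S]
    (r : ℕ) (hr : 1 ≤ r) (a : ℕ → R)
    (hunit : IsUnit (a 1))
    (hnil : ∀ i < r, i ≠ 1 → IsNilpotent (a i))
    (s : S)
    (hli : LinearIndependent R (fun i : Fin r => s ^ (i : ℕ)))
    (hclosed : s ^ r ∈ Submodule.span R (Set.range fun i : Fin r => s ^ (i : ℕ)))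
    (fs : S)
    (hfs : fs = ∑ i ∈ Finset.range r, algebraMap R S (a i) * s ^ i) :
    Submodule.span R (Set.range fun i : Fin r => fs ^ (i : ℕ)) =
        Submodule.span R (Set.range fun i : Fin r => s ^ (i : ℕ)) ∧
      LinearIndependent R (fun i : Fin r => fs ^ (i : ℕ)) := by
  set M : Submodule R S := Submodule.span R (Set.range fun i : Fin r => s ^ (i : ℕ)) with hM
  -- s * M ⊆ M
  have hmul_s : ∀ x ∈ M, s * x ∈ M := by
    intro x hx
    induction hx using Submodule.span_induction with
    | mem x hx =>
        obtain ⟨i, rfl⟩ := hx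
        rcases lt_or_eq_of_le (Nat.succ_le_of_lt i.2) with h | h
        · exact Submodule.subset_span ⟨⟨(i : ℕ) + 1, h⟩, by simp [pow_succ, mul_comm]⟩
        · have hs : s * s ^ (i : ℕ) = s ^ r := by
            rw [mul_comm, ← pow_succ]; exact congrArg (s ^ ·) h
          rw [hs]; exact hclosed
    | zero => simpa using M.zero_mem
    | add x y _ _ hx hy => rw [mul_add]; exact M.add_mem hx hy
    | smul c x _ hx => rw [mul_smul_comm]; exact M.smul_mem c hx
  -- all powers of s are in M
  have hpow : ∀ k, s ^ k ∈ M := by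
    intro k
    induction k with
    | zero => exact Submodule.subset_span ⟨⟨0, hr⟩, rfl⟩
    | succ k ih => rw [pow_succ, mul_comm]; exact hmul_s _ ih
  -- M is closed under multiplication
  have hmulpow : ∀ k, ∀ x ∈ M, x * s ^ k ∈ M := by
    intro k
    induction k with
    | zero => intro x hx; simpa using hx
    | succ k ih =>
        intro x hx
        rw [pow_succ, show x * (s ^ k * s) = s * (x * s ^ k) by ring]
        exact hmul_s _ (ih x hx)
  have hmul : ∀ x ∈ M, ∀ y ∈ M, x * y ∈ M := by
    intro x hx y hy
    induction hy using Submodule.span_induction with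
    | mem y hy => obtain ⟨i, rfl⟩ := hy; exact hmulpow _ x hx
    | zero => simpa using M.zero_mem
    | add y z _ _ hy hz => rw [mul_add]; exact M.add_mem hy hz
    | smul c y _ hy => rw [mul_smul_comm]; exact M.smul_mem c hy
  -- fs and its powers are in M
  have hfsM : fs ∈ M := by
    rw [hfs]
    exact Submodule.sum_mem M fun i _ => by
      rw [← Algebra.smul_def]; exact M.smul_mem _ (hpow i)
  have hfspow : ∀ j, fs ^ j ∈ M := by
    intro j
    induction j with
    | zero => simpa using hpow 0
    | succ j ih => rw [pow_succ]; exact hmul _ ih _ hfsM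
  -- trivial case r = 1
  rcases eq_or_lt_of_le hr with h1 | h2
  · have heq : (fun i : Fin r => fs ^ (i : ℕ)) = fun i : Fin r => s ^ (i : ℕ) := by
      funext i
      have : (i : ℕ) = 0 := by omega
      rw [this, pow_zero, pow_zero]
    exact ⟨by rw [heq], by rw [heq]; exact hli⟩
  -- main case: 2 ≤ r
  have hdiff : fs - a 1 • s ∈ (nilradical R • M : Submodule R S) := by
    have h1r : (1 : ℕ) ∈ Finset.range r := Finset.mem_range.mpr h2
    have : fs = (∑ i ∈ (Finset.range r).erase 1, a i • s ^ i) + a 1 • s := by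
      rw [hfs]
      rw [show (a 1 : R) • s = a 1 • s ^ 1 by rw [pow_one]]
      rw [← Finset.sum_erase_add _ _ h1r]
      congr 1
      · exact Finset.sum_congr rfl fun i _ => (Algebra.smul_def _ _).symm
      · rw [← Algebra.smul_def]
    rw [this, add_sub_cancel_right]
    refine Submodule.sum_mem _ fun i hi => ?_
    have hiN : a i ∈ nilradical R := hnil i (Finset.mem_range.mp (Finset.mem_of_mem_erase hi))
      (Finset.ne_of_mem_erase hi)
    exact Submodule.smul_mem_smul hiN (hpow i)
  have hNM_mul : ∀ x ∈ (nilradical R • M : Submodule R S), ∀ y ∈ M,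
      x * y ∈ (nilradical R • M : Submodule R S) := by
    intro x hx y hy
    refine Submodule.smul_induction_on hx (fun c hc m hm => ?_) (fun x₁ x₂ h₁ h₂ => ?_)
    · rw [smul_mul_assoc]
      exact Submodule.smul_mem_smul hc (hmul _ hm _ hy)
    · rw [add_mul]; exact Submodule.add_mem _ h₁ h₂
  have key : ∀ j : ℕ, fs ^ j - (a 1 • s) ^ j ∈ (nilradical R • M : Submodule R S) := by
    intro j
    induction j with
    | zero => simpa using Submodule.zero_mem _
    | succ j ih =>
        have heq : fs ^ (j + 1) - (a 1 • s) ^ (j + 1) =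
            (fs - a 1 • s) * fs ^ j + (fs ^ j - (a 1 • s) ^ j) * (a 1 • s) := by
          ring
        rw [heq]
        refine Submodule.add_mem _ (hNM_mul _ hdiff _ (hfspow j)) (hNM_mul _ ih _ ?_)
        simpa using M.smul_mem (a 1) (hpow 1)
  -- the basis
  let B : Module.Basis (Fin r) R M := Module.Basis.span hli
  have hBapp : ∀ i : Fin r, (B i : S) = s ^ (i : ℕ) := fun i => congrArg Subtype.val (Module.Basis.span_apply hli i)
  -- family of twisted powers inside M
  let w : Fin r → M := fun j => ⟨fs ^ (j : ℕ), hfspow j⟩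
  -- coordinates of elements of (nilradical R) • M are in the nilradical
  have hcoordN : ∀ x : M, (x : S) ∈ (nilradical R • M : Submodule R S) →
      ∀ i, B.repr x i ∈ nilradical R := by
    intro x hx i
    rw [← Submodule.mem_smul_top_iff] at hx
    refine Submodule.smul_induction_on hx (fun c hc m _ => ?_) (fun x₁ x₂ h₁ h₂ => ?_)
    · rw [map_smul, Finsupp.smul_apply, smul_eq_mul]
      exact (nilradical R).mul_mem_right _ hc
    · rw [map_add, Finsupp.add_apply]; exact Ideal.add_mem _ h₁ h₂
  -- matrix entries mod nilradical
  have hC : ∀ i j : Fin r,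
      B.toMatrix w i j - (if i = j then a 1 ^ (j : ℕ) else 0) ∈ nilradical R := by
    intro i j
    have hd : ((w j - (a 1 ^ (j : ℕ)) • B j : M) : S) ∈ (nilradical R • M : Submodule R S) := by
      have hcoe : ((w j - (a 1 ^ (j : ℕ)) • B j : M) : S) =
          fs ^ (j : ℕ) - (a 1 • s) ^ (j : ℕ) := by
        push_cast [hBapp]
        rw [smul_pow]
      rw [hcoe]
      exact key j
    have hrep := hcoordN _ hd i
    rw [map_sub, map_smul, Finsupp.sub_apply, Finsupp.smul_apply, B.repr_self,
      Finsupp.single_apply, smul_eq_mul] at hrep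
    have hmx : B.toMatrix w i j = B.repr (w j) i := rfl
    rw [hmx]
    rcases eq_or_ne i j with rfl | hne
    · simpa using hrep
    · simpa [Ne.symm hne, hne] using hrep
  -- determinant is a unit
  have hdet : IsUnit (B.det w) := by
    rw [Module.Basis.det_apply]
    apply aux_isUnit_of_quot
    rw [RingHom.map_det]
    have hmap : (Ideal.Quotient.mk (nilradical R)).mapMatrix (B.toMatrix w) =
        Matrix.diagonal fun j : Fin r => Ideal.Quotient.mk (nilradical R) (a 1 ^ (j : ℕ)) := by
      ext i j
      rw [RingHom.mapMatrix_apply, Matrix.map_apply]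
      rcases eq_or_ne i j with rfl | hne
      · have h := hC i i
        simp only [if_pos rfl] at h
        rw [Matrix.diagonal_apply_eq]
        rwa [← sub_eq_zero, ← map_sub, Ideal.Quotient.eq_zero_iff_mem]
      · have h := hC i j
        simp only [if_neg hne] at h
        rw [Matrix.diagonal_apply_ne _ hne, Ideal.Quotient.eq_zero_iff_mem]
        simpa using h
    rw [hmap, Matrix.det_diagonal, ← map_prod]
    rw [Finset.prod_pow_eq_pow_sum]
    exact ((hunit.pow _).map _)
  obtain ⟨hwli, hwspan⟩ := (Module.Basis.is_basis_iff_det B).mpr hdet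
  constructor
  · have hrange : Set.range (fun i : Fin r => fs ^ (i : ℕ)) = M.subtype '' Set.range w := by
      rw [← Set.range_comp]
      rfl
    rw [hrange, ← Submodule.map_span, hwspan, Submodule.map_top, Submodule.range_subtype]
  · have hcomp : (fun i : Fin r => fs ^ (i : ℕ)) = M.subtype ∘ w := rfl
    rw [hcomp]
    exact hwli.map' M.subtype M.ker_subtype
end
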